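/- If Q₁ and Q₂ are quasi-nilpotent bounded operators on Hilbert spaces H and K respectively, commuting with A ∈ B(H) and B ∈ B(K) respectively, then (A+Q₁) ⊗ (B+Q₂) = A ⊗ B + Q where Q = Q₁ ⊗ B + A ⊗ Q₂ + Q₁ ⊗ Q₂ is quasi-nilpotent. -/

import Mathlib

open Filter ENNReal

section Aux
variable {A' : Type*} [NormedRing A'] [NormedAlgebra ℂ A'] [CompleteSpace A']

lemma sr_zero_of_le (x : A') (f : ℕ → ℝ≥0∞) (hf : Tendsto f atTop (nhds 0))
    (hle : ∀ᶠ n : ℕ in atTop, (‖x ^ n‖₊ : ℝ≥0∞) ^ (1 / (n : ℝ)) ≤ f n) :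
    spectralRadius ℂ x = 0 := by
  refine le_antisymm ?_ zero_le
  calc spectralRadius ℂ x
      ≤ atTop.liminf fun n : ℕ => (‖x ^ n‖₊ : ℝ≥0∞) ^ (1 / (n : ℝ)) :=
        spectrum.spectralRadius_le_liminf_pow_nnnorm_pow_one_div ℂ x
    _ ≤ atTop.liminf f := Filter.liminf_le_liminf hle
    _ = 0 := hf.liminf_eq

lemma sr_ne_top (x : A') : spectralRadius ℂ x ≠ ⊤ := by
  refine ne_top_of_le_ne_top ?_ (spectrum.spectralRadius_le_pow_nnnorm_pow_one_div ℂ x 0)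
  simp
  exact ENNReal.mul_ne_top ENNReal.coe_ne_top ENNReal.coe_ne_top

lemma sr_mul_zero (x y : A') (h : Commute x y) (hy : spectralRadius ℂ y = 0) :
    spectralRadius ℂ (x * y) = 0 := by
  apply sr_zero_of_le (x * y)
      (fun n => (‖x ^ n‖₊ : ℝ≥0∞) ^ (1 / (n : ℝ)) * (‖y ^ n‖₊ : ℝ≥0∞) ^ (1 / (n : ℝ)))
  · have h1 := spectrum.pow_nnnorm_pow_one_div_tendsto_nhds_spectralRadius x
    have h2 := spectrum.pow_nnnorm_pow_one_div_tendsto_nhds_spectralRadius y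
    rw [hy] at h2
    have := ENNReal.Tendsto.mul h1 (Or.inr ENNReal.zero_ne_top) h2 (Or.inr (sr_ne_top x))
    simpa using this
  · refine Filter.Eventually.of_forall fun n => ?_
    rw [← ENNReal.mul_rpow_of_nonneg _ _ (by positivity : (0:ℝ) ≤ 1 / n)]
    refine ENNReal.rpow_le_rpow ?_ (by positivity)
    rw [h.mul_pow]
    exact_mod_cast nnnorm_mul_le (x ^ n) (y ^ n)

lemma sr_add_zero (x y : A') (h : Commute x y) (hx : spectralRadius ℂ x = 0)
    (hy : spectralRadius ℂ y = 0) : spectralRadius ℂ (x + y) = 0 := by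
  have hσ : spectrum ℂ (x + y) ⊆ {0} := by
    intro z hz
    simp only [Set.mem_singleton_iff]
    by_contra hz0
    have h1 : z ∈ resolventSet ℂ x :=
      spectrum.mem_resolventSet_of_spectralRadius_lt (by
        rw [hx]; exact_mod_cast pos_iff_ne_zero.2 (nnnorm_ne_zero_iff.2 hz0))
    have hu : IsUnit (algebraMap ℂ A' z - x) := h1
    set u := algebraMap ℂ A' z - x with hu_def
    have hcuy : Commute u y := Commute.sub_left (Algebra.commutes z y) h
    have hcvy : Commute (↑hu.unit⁻¹ : A') y := by
      have : Commute (↑hu.unit : A') y := by rwa [hu.unit_spec]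
      exact this.units_inv_left
    have hw : spectralRadius ℂ ((↑hu.unit⁻¹ : A') * y) = 0 :=
      sr_mul_zero _ _ hcvy hy
    have h2 : (1 : ℂ) ∈ resolventSet ℂ ((↑hu.unit⁻¹ : A') * y) :=
      spectrum.mem_resolventSet_of_spectralRadius_lt (by rw [hw]; simp)
    have h3 : IsUnit (1 - (↑hu.unit⁻¹ : A') * y) := by
      have := h2
      rwa [resolventSet, Set.mem_setOf_eq, map_one] at this
    have h4 : IsUnit (algebraMap ℂ A' z - (x + y)) := by
      have : u * (1 - (↑hu.unit⁻¹ : A') * y) = algebraMap ℂ A' z - (x + y) := by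
        rw [mul_sub, mul_one, ← mul_assoc, IsUnit.mul_val_inv, one_mul, hu_def]
        abel
      rw [← this]
      exact hu.mul h3
    exact (spectrum.mem_iff.mp hz) h4
  refine le_antisymm ?_ zero_le
  refine iSup₂_le fun k hk => ?_
  have := hσ hk
  simp_all

end Aux

lemma pow_rpow_inv_self (b : ℝ≥0∞) (m : ℕ) :
    (b ^ (m + 1)) ^ (1 / ((m + 1 : ℕ) : ℝ)) = b := by
  rw [← ENNReal.rpow_natCast b (m + 1), ← ENNReal.rpow_mul, mul_one_div,
    div_self (by exact_mod_cast Nat.succ_ne_zero m), ENNReal.rpow_one]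

/-- If Q₁, Q₂ are quasi-nilpotent operators commuting with A, B respectively,
then (A+Q₁) ⊗ (B+Q₂) = A ⊗ B + Q where Q = Q₁⊗B + A⊗Q₂ + Q₁⊗Q₂ is
quasi-nilpotent.  The Hilbert-space tensor product of operators is axiomatized
by a bilinear map `otimes` which is multiplicative, submultiplicative in norm,
and compatible with elementary tensors `tmul`. -/
theorem tensor_perturbation_quasinilpotent
    {H K HK : Type*}
    [NormedAddCommGroup H] [InnerProductSpace ℂ H] [CompleteSpace H]
    [NormedAddCommGroup K] [InnerProductSpace ℂ K] [CompleteSpace K]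
    [NormedAddCommGroup HK] [InnerProductSpace ℂ HK] [CompleteSpace HK]
    (tmul : H →ₗ[ℂ] K →ₗ[ℂ] HK)
    (otimes : (H →L[ℂ] H) →ₗ[ℂ] (K →L[ℂ] K) →ₗ[ℂ] (HK →L[ℂ] HK))
    (h_apply : ∀ (T : H →L[ℂ] H) (S : K →L[ℂ] K) (x : H) (y : K),
      (otimes T S) (tmul x y) = tmul (T x) (S y))
    (h_mul : ∀ (T T' : H →L[ℂ] H) (S S' : K →L[ℂ] K),
      otimes (T * T') (S * S') = otimes T S * otimes T' S')
    (h_norm : ∀ (T : H →L[ℂ] H) (S : K →L[ℂ] K), ‖otimes T S‖ ≤ ‖T‖ * ‖S‖)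
    (A Q₁ : H →L[ℂ] H) (B Q₂ : K →L[ℂ] K)
    (hQ₁ : spectralRadius ℂ Q₁ = 0) (hQ₂ : spectralRadius ℂ Q₂ = 0)
    (hc₁ : Q₁ * A = A * Q₁) (hc₂ : Q₂ * B = B * Q₂) :
    otimes (A + Q₁) (B + Q₂)
      = otimes A B + (otimes Q₁ B + otimes A Q₂ + otimes Q₁ Q₂) ∧
    spectralRadius ℂ (otimes Q₁ B + otimes A Q₂ + otimes Q₁ Q₂) = 0 := by
  have hpow : ∀ (T : H →L[ℂ] H) (S : K →L[ℂ] K) (n : ℕ),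
      (otimes T S) ^ (n + 1) = otimes (T ^ (n + 1)) (S ^ (n + 1)) := by
    intro T S n
    induction n with
    | zero => simp
    | succ n ih => rw [pow_succ, ih, ← h_mul, ← pow_succ, ← pow_succ]
  have hnn : ∀ (T : H →L[ℂ] H) (S : K →L[ℂ] K),
      (‖otimes T S‖₊ : ℝ≥0∞) ≤ (‖T‖₊ : ℝ≥0∞) * ‖S‖₊ := by
    intro T S
    exact_mod_cast h_norm T S
  set C := B + Q₂ with hC
  -- the two commuting quasinilpotent pieces
  have hXsr : spectralRadius ℂ (otimes Q₁ C) = 0 := by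
    apply sr_zero_of_le _ (fun n : ℕ => (‖Q₁ ^ n‖₊ : ℝ≥0∞) ^ (1 / (n : ℝ)) * (‖C‖₊ : ℝ≥0∞))
    · have h1 := spectrum.pow_nnnorm_pow_one_div_tendsto_nhds_spectralRadius Q₁
      rw [hQ₁] at h1
      have := ENNReal.Tendsto.mul_const (b := (‖C‖₊ : ℝ≥0∞)) h1 (Or.inr ENNReal.coe_ne_top)
      simpa using this
    · filter_upwards [Filter.eventually_ge_atTop 1] with n hn
      obtain ⟨m, rfl⟩ : ∃ m, n = m + 1 := ⟨n - 1, by omega⟩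
      rw [hpow]
      calc (‖otimes (Q₁ ^ (m + 1)) (C ^ (m + 1))‖₊ : ℝ≥0∞) ^ (1 / ((m + 1 : ℕ) : ℝ))
          ≤ ((‖Q₁ ^ (m + 1)‖₊ : ℝ≥0∞) * (‖C‖₊ : ℝ≥0∞) ^ (m + 1)) ^ (1 / ((m + 1 : ℕ) : ℝ)) := by
            refine ENNReal.rpow_le_rpow ?_ (by positivity)
            refine (hnn _ _).trans (mul_le_mul_right ?_ _)
            exact_mod_cast nnnorm_pow_le' C (Nat.succ_pos m)
        _ = (‖Q₁ ^ (m + 1)‖₊ : ℝ≥0∞) ^ (1 / ((m + 1 : ℕ) : ℝ)) * (‖C‖₊ : ℝ≥0∞) := by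
            rw [ENNReal.mul_rpow_of_nonneg _ _ (by positivity),
              pow_rpow_inv_self]
        _ ≤ _ := le_rfl
  have hYsr : spectralRadius ℂ (otimes A Q₂) = 0 := by
    apply sr_zero_of_le _ (fun n : ℕ => (‖A‖₊ : ℝ≥0∞) * (‖Q₂ ^ n‖₊ : ℝ≥0∞) ^ (1 / (n : ℝ)))
    · have h1 := spectrum.pow_nnnorm_pow_one_div_tendsto_nhds_spectralRadius Q₂
      rw [hQ₂] at h1
      have := ENNReal.Tendsto.const_mul (a := (‖A‖₊ : ℝ≥0∞)) h1 (Or.inr ENNReal.coe_ne_top)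
      simpa using this
    · filter_upwards [Filter.eventually_ge_atTop 1] with n hn
      obtain ⟨m, rfl⟩ : ∃ m, n = m + 1 := ⟨n - 1, by omega⟩
      rw [hpow]
      calc (‖otimes (A ^ (m + 1)) (Q₂ ^ (m + 1))‖₊ : ℝ≥0∞) ^ (1 / ((m + 1 : ℕ) : ℝ))
          ≤ ((‖A‖₊ : ℝ≥0∞) ^ (m + 1) * (‖Q₂ ^ (m + 1)‖₊ : ℝ≥0∞)) ^ (1 / ((m + 1 : ℕ) : ℝ)) := by
            refine ENNReal.rpow_le_rpow ?_ (by positivity)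
            refine (hnn _ _).trans (mul_le_mul_left ?_ _)
            exact_mod_cast nnnorm_pow_le' A (Nat.succ_pos m)
        _ = (‖A‖₊ : ℝ≥0∞) * (‖Q₂ ^ (m + 1)‖₊ : ℝ≥0∞) ^ (1 / ((m + 1 : ℕ) : ℝ)) := by
            rw [ENNReal.mul_rpow_of_nonneg _ _ (by positivity),
              pow_rpow_inv_self]
        _ ≤ _ := le_rfl
  have hcomm : Commute (otimes Q₁ C) (otimes A Q₂) := by
    unfold Commute SemiconjBy
    rw [← h_mul, ← h_mul, hc₁, hC, add_mul, mul_add, hc₂]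
  have hQsplit : otimes Q₁ B + otimes A Q₂ + otimes Q₁ Q₂
      = otimes Q₁ C + otimes A Q₂ := by
    rw [hC, map_add]
    abel
  constructor
  · rw [map_add (otimes (A + Q₁)) B Q₂, map_add otimes A Q₁,
      LinearMap.add_apply, LinearMap.add_apply]
    abel
  · rw [hQsplit]
    exact sr_add_zero _ _ hcomm hXsr hYsr
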